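/- Let K be an algebraically closed field of characteristic zero, let a_1 ≥ a_2 ≥ 0 and 0 ≤ b_1 ≤ b_2 be integers with a_1 + a_2 = b_1 + b_2 and b_1 ≤ a_1. Let v be the 2 × 4 matrix over K[x,y] with rows (x^{a_1}, y^{a_1}, 0, x^{a_1−b_1}y^{b_1}) and (0, x^{a_2}, y^{a_2}, 0), and let u be the 4 × 2 matrix with rows (−y^{b_1}, 0), (0, x^{a_1−b_1}y^{a_2}), (0, −x^{b_2}), (x^{b_1}, −y^{b_2}). Then for every 2 × 2 matrix P over K[x,y] whose (i,j) entry is homogeneous of degree a_i + b_j, there exist a 4 × 2 matrix R whose (i,j) entry is homogeneous of degree b_j and a 2 × 4 matrix Q whose (i,j) entry is homogeneous of degree a_i, such that P = v · R + Q · u. (This says the differential DΦ_{(u,v)} of the composition map Φ(φ,ψ) = ψ ∘ φ is surjective at (u,v), i.e., the loci M(b_•) and M′(a_•) meet transversely at the corresponding morphism P^1 → G(2,4).) -/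

import Mathlib

open MvPolynomial

lemma deg2 (d : Fin 2 →₀ ℕ) : d.degree = d 0 + d 1 := by
  rw [Finsupp.degree, ← Fin.sum_univ_two (fun i => d i)]
  exact Finset.sum_subset (Finset.subset_univ _)
    (fun i _ hi => Finsupp.notMem_support_iff.mp hi)

lemma split_homog {K : Type*} [CommRing K] (m n : ℕ) (h : MvPolynomial (Fin 2) K)
    (hh : h.IsHomogeneous (m + n)) :
    ∃ f g : MvPolynomial (Fin 2) K, f.IsHomogeneous n ∧ g.IsHomogeneous m ∧
      h = X 0 ^ m * f + X 1 ^ n * g := by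
  classical
  have hdeg : ∀ d ∈ h.support, d 0 + d 1 = m + n := by
    intro d hd
    have := hh (mem_support_iff.mp hd)
    rw [show (1 : Fin 2 → ℕ) = fun _ => 1 from rfl, ← Finsupp.degree_eq_weight_one] at this
    rw [← deg2]; exact this
  refine ⟨∑ d ∈ h.support.filter (fun d => m ≤ d 0),
      monomial (d - Finsupp.single 0 m) (coeff d h),
    ∑ d ∈ h.support.filter (fun d => ¬ m ≤ d 0),
      monomial (d - Finsupp.single 1 n) (coeff d h), ?_, ?_, ?_⟩
  · refine IsHomogeneous.sum _ _ _ fun d hd => isHomogeneous_monomial _ ?_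
    rw [Finset.mem_filter] at hd
    have h0 : m ≤ d 0 := hd.2
    have := hdeg d hd.1
    rw [deg2]
    simp only [Finsupp.tsub_apply, Finsupp.single_apply]
    simp only [show ((0:Fin 2) = 0) = True by simp, show ((0:Fin 2) = 1) = False by simp,
      if_true, if_false, Nat.sub_zero]
    omega
  · refine IsHomogeneous.sum _ _ _ fun d hd => isHomogeneous_monomial _ ?_
    rw [Finset.mem_filter] at hd
    have h0 : ¬ m ≤ d 0 := hd.2
    have := hdeg d hd.1
    rw [deg2]
    simp only [Finsupp.tsub_apply, Finsupp.single_apply]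
    simp only [show ((1:Fin 2) = 0) = False by simp, show ((1:Fin 2) = 1) = True by simp,
      if_true, if_false, Nat.sub_zero]
    omega
  · conv_lhs => rw [← support_sum_monomial_coeff h]
    rw [← Finset.sum_filter_add_sum_filter_not h.support (fun d => m ≤ d 0), Finset.mul_sum,
      Finset.mul_sum]
    congr 1
    · refine Finset.sum_congr rfl fun d hd => ?_
      rw [Finset.mem_filter] at hd
      rw [X_pow_eq_monomial, monomial_mul, one_mul,
        add_tsub_cancel_of_le (Finsupp.single_le_iff.mpr hd.2)]
    · refine Finset.sum_congr rfl fun d hd => ?_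
      rw [Finset.mem_filter] at hd
      have : n ≤ d 1 := by have := hdeg d hd.1; omega
      rw [X_pow_eq_monomial, monomial_mul, one_mul,
        add_tsub_cancel_of_le (Finsupp.single_le_iff.mpr this)]

/-- for the explicit pair `(u, v)` in the case `G(2,4)`, the
differential `DΦ_{(u,v)}` is surjective: every `2×2` matrix `P` with `(i,j)`
entry homogeneous of degree `a_i + b_j` can be written `P = v * R + Q * u`
with `R` a `4×2` matrix of homogeneous polynomials of degrees `b_j` and `Q` a
`2×4` matrix of homogeneous polynomials of degrees `a_i`. -/
theorem stmt6 (K : Type*) [Field K] [IsAlgClosed K] [CharZero K] (a1 a2 b1 b2 : ℕ)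
    (ha : a2 ≤ a1) (hb : b1 ≤ b2) (hsum : a1 + a2 = b1 + b2) (hb1 : b1 ≤ a1)
    (v : Matrix (Fin 2) (Fin 4) (MvPolynomial (Fin 2) K))
    (u : Matrix (Fin 4) (Fin 2) (MvPolynomial (Fin 2) K))
    (hv : v = !![X 0 ^ a1, X 1 ^ a1, 0, X 0 ^ (a1 - b1) * X 1 ^ b1;
                 0, X 0 ^ a2, X 1 ^ a2, 0])
    (hu : u = !![-(X 1 ^ b1), 0;
                 0, X 0 ^ (a1 - b1) * X 1 ^ a2;
                 0, -(X 0 ^ b2);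
                 X 0 ^ b1, -(X 1 ^ b2)]) :
    ∀ P : Matrix (Fin 2) (Fin 2) (MvPolynomial (Fin 2) K),
      (∀ i j, (P i j).IsHomogeneous (![a1, a2] i + ![b1, b2] j)) →
      ∃ (R : Matrix (Fin 4) (Fin 2) (MvPolynomial (Fin 2) K))
        (Q : Matrix (Fin 2) (Fin 4) (MvPolynomial (Fin 2) K)),
        (∀ i j, (R i j).IsHomogeneous (![b1, b2] j)) ∧
        (∀ i j, (Q i j).IsHomogeneous (![a1, a2] i)) ∧
        P = v * R + Q * u := by
  intro P hP
  have h00 : (P 0 0).IsHomogeneous (a1 + b1) := by simpa using hP 0 0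
  have h01 : (P 0 1).IsHomogeneous (a1 + b2) := by simpa using hP 0 1
  have h10 : (P 1 0).IsHomogeneous (a2 + b1) := by simpa using hP 1 0
  have h11 : (P 1 1).IsHomogeneous (a2 + b2) := by simpa using hP 1 1
  obtain ⟨f1, g1, hf1, hg1, e1⟩ := split_homog a1 b2 (P 0 1) h01
  obtain ⟨f2, g2, hf2, hg2, e2⟩ := split_homog a1 b1 (P 0 0 + X 0 ^ b1 * g1)
    (h00.add (by simpa [add_comm b1 a1] using (isHomogeneous_X_pow (R := K) 0 b1).mul hg1))
  obtain ⟨f3, g3, hf3, hg3, e3⟩ := split_homog b1 a2 (P 1 0)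
    (by simpa [add_comm b1 a2] using h10)
  obtain ⟨f4, g4, hf4, hg4, e4⟩ := split_homog b2 a2 (P 1 1 + X 1 ^ b2 * f3)
    ((show (P 1 1).IsHomogeneous (b2 + a2) by simpa [add_comm b2 a2] using h11).add ((isHomogeneous_X_pow (R := K) 1 b2).mul hf3))
  refine ⟨!![f2, f1; 0, 0; g3, g4; 0, 0], !![-g2, 0, 0, -g1; 0, 0, -f4, f3], ?_, ?_, ?_⟩
  · intro i j
    fin_cases i <;> fin_cases j <;>
      simp [hf2, hf1, hg3, hg4, isHomogeneous_zero]
  · intro i j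
    fin_cases i <;> fin_cases j <;>
      simp [hg2.neg, hg1.neg, hf4.neg, hf3, isHomogeneous_zero]
  · subst hv hu
    refine Matrix.ext fun i j => ?_
    fin_cases i <;> fin_cases j <;>
      simp [Matrix.mul_apply, Fin.sum_univ_four]
    · linear_combination e2
    · linear_combination e1
    · linear_combination e3
    · linear_combination e4
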